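/- Every element of Sp(2n, F_2) can be written as a product of at most 4n symplectic transvections; that is, for every S in Sp(2n, F_2) there exist vectors h_1, …, h_m in F_2^{2n} with m ≤ 4n such that S = Z_{h_1} Z_{h_2} ⋯ Z_{h_m} as linear maps on F_2^{2n}. -/

import Mathlib

open Matrix Finset

/-- `Λ(n)`: the `2n × 2n` block-diagonal matrix over `F₂` that is the direct sum of
`n` copies of `[[0,1],[1,0]]`. -/
def Lam (n : ℕ) : Matrix (Fin (2 * n)) (Fin (2 * n)) (ZMod 2) :=
  Matrix.of fun i j => if i.val / 2 = j.val / 2 ∧ i ≠ j then 1 else 0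

/-- The symplectic inner product `⟨v, w⟩ = vᵀ Λ(n) w` on `F₂^{2n}`. -/
def sip {n : ℕ} (v w : Fin (2 * n) → ZMod 2) : ZMod 2 :=
  v ⬝ᵥ (Lam n).mulVec w

/-- `Sp(2n, F₂)`: the set of `2n × 2n` matrices `S` over `F₂` with `S Λ(n) Sᵀ = Λ(n)`. -/
def Sp (n : ℕ) : Set (Matrix (Fin (2 * n)) (Fin (2 * n)) (ZMod 2)) :=
  {S | S * Lam n * Sᵀ = Lam n}

/-- The symplectic transvection `Z_h : v ↦ v + ⟨v, h⟩ h`. -/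
def Zt {n : ℕ} (h v : Fin (2 * n) → ZMod 2) : Fin (2 * n) → ZMod 2 :=
  v + sip v h • h

/-- partner index -/
def pr {n : ℕ} (i : Fin (2 * n)) : Fin (2 * n) :=
  ⟨if i.val % 2 = 0 then i.val + 1 else i.val - 1, by
    rcases i with ⟨i, hi⟩; dsimp; split <;> omega⟩

lemma pr_pr {n : ℕ} (i : Fin (2 * n)) : pr (pr i) = i := by
  rcases i with ⟨i, hi⟩
  simp only [pr, Fin.mk.injEq]
  split <;> split <;> omega

lemma pr_ne {n : ℕ} (i : Fin (2 * n)) : pr i ≠ i := by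
  rcases i with ⟨i, hi⟩
  simp only [pr, ne_eq, Fin.mk.injEq]
  split <;> omega

lemma Lam_apply {n : ℕ} (i j : Fin (2 * n)) :
    Lam n i j = if j = pr i then 1 else 0 := by
  have : (i.val / 2 = j.val / 2 ∧ i ≠ j) ↔ j = pr i := by
    rw [Fin.ext_iff, Ne, Fin.ext_iff]
    rcases i with ⟨i, hi⟩; rcases j with ⟨j, hj⟩
    simp only [pr]
    split <;> omega
  rw [Lam, Matrix.of_apply, if_congr this rfl rfl]

lemma sip_eq {n : ℕ} (v w : Fin (2 * n) → ZMod 2) :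
    sip v w = ∑ i, v i * w (pr i) := by
  unfold sip dotProduct Matrix.mulVec
  refine Finset.sum_congr rfl fun i _ => ?_
  congr 1
  unfold dotProduct
  simp [Lam_apply, eq_comm]

lemma sip_comm {n : ℕ} (v w : Fin (2 * n) → ZMod 2) : sip v w = sip w v := by
  rw [sip_eq, sip_eq]
  rw [← Equiv.sum_comp (Function.Involutive.toPerm pr pr_pr) (fun i => w i * v (pr i))]
  refine Finset.sum_congr rfl fun i _ => ?_
  simp [Function.Involutive.toPerm, pr_pr, mul_comm]

lemma sip_self {n : ℕ} (v : Fin (2 * n) → ZMod 2) : sip v v = 0 := by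
  rw [sip_eq]
  refine Finset.sum_involution (fun i _ => pr i) (fun i _ => ?_) (fun i _ _ => ?_)
    (fun i _ => Finset.mem_univ _) (fun i _ => pr_pr i)
  · rw [pr_pr, mul_comm]
    exact CharTwo.add_self_eq_zero _
  · exact pr_ne i

lemma sip_add_left {n : ℕ} (v w u : Fin (2 * n) → ZMod 2) :
    sip (v + w) u = sip v u + sip w u := by
  unfold sip; exact add_dotProduct _ _ _

lemma sip_add_right {n : ℕ} (v w u : Fin (2 * n) → ZMod 2) :
    sip u (v + w) = sip u v + sip u w := by
  unfold sip; rw [Matrix.mulVec_add, dotProduct_add]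

lemma sip_smul_left {n : ℕ} (c : ZMod 2) (v u : Fin (2 * n) → ZMod 2) :
    sip (c • v) u = c * sip v u := by
  unfold sip; exact smul_dotProduct _ _ _

lemma sip_smul_right {n : ℕ} (c : ZMod 2) (v u : Fin (2 * n) → ZMod 2) :
    sip u (c • v) = c * sip u v := by
  rw [sip_comm, sip_smul_left, sip_comm u v]

lemma sip_zero_left {n : ℕ} (u : Fin (2 * n) → ZMod 2) : sip 0 u = 0 := by
  unfold sip; exact zero_dotProduct _

lemma sip_zero_right {n : ℕ} (u : Fin (2 * n) → ZMod 2) : sip u 0 = 0 := by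
  rw [sip_comm]; exact sip_zero_left u

lemma sip_single {n : ℕ} (j : Fin (2 * n)) (v : Fin (2 * n) → ZMod 2) :
    sip (Pi.single j 1) v = v (pr j) := by
  rw [sip_eq]
  rw [Finset.sum_eq_single j]
  · simp
  · intro i _ hij; simp [Pi.single_eq_of_ne hij]
  · simp

lemma exists_sip_one {n : ℕ} (v : Fin (2 * n) → ZMod 2) (hv : v ≠ 0) :
    ∃ u, sip v u = 1 := by
  obtain ⟨i, hi⟩ : ∃ i, v i ≠ 0 := by
    by_contra h; push_neg at h; exact hv (funext fun i => h i)
  refine ⟨Pi.single (pr i) 1, ?_⟩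
  rw [sip_comm, sip_single, pr_pr]
  have : ∀ x : ZMod 2, x ≠ 0 → x = 1 := by decide
  exact this _ hi

-- Zt lemmas
lemma Zt_zero {n : ℕ} (v : Fin (2 * n) → ZMod 2) : Zt 0 v = v := by
  simp [Zt, sip_zero_right]

lemma Zt_zero' {n : ℕ} (h : Fin (2 * n) → ZMod 2) : Zt h 0 = 0 := by
  simp [Zt, sip_zero_left]

lemma Zt_add {n : ℕ} (h v w : Fin (2 * n) → ZMod 2) :
    Zt h (v + w) = Zt h v + Zt h w := by
  unfold Zt
  rw [sip_add_left, add_smul]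
  abel

lemma Zt_sip {n : ℕ} (h v w : Fin (2 * n) → ZMod 2) :
    sip (Zt h v) (Zt h w) = sip v w := by
  unfold Zt
  rw [sip_add_left, sip_add_right, sip_add_right, sip_smul_left, sip_smul_left,
    sip_smul_right, sip_smul_right, sip_self, sip_comm h w]
  linear_combination (CharTwo.add_self_eq_zero (sip v h * sip w h))

lemma Zt_invol {n : ℕ} (h v : Fin (2 * n) → ZMod 2) : Zt h (Zt h v) = v := by
  unfold Zt
  rw [sip_add_left, sip_smul_left, sip_self, mul_zero, add_zero,
    add_assoc, ← add_smul, CharTwo.add_self_eq_zero (sip v h), zero_smul, add_zero]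

lemma add_self_vec {n : ℕ} (a : Fin (2 * n) → ZMod 2) : a + a = 0 := by
  funext i; exact CharTwo.add_self_eq_zero _

lemma zmod2_cases (x : ZMod 2) : x = 0 ∨ x = 1 := by revert x; decide

lemma foldr_add {n : ℕ} (l : List (Fin (2 * n) → ZMod 2)) (v w : Fin (2 * n) → ZMod 2) :
    l.foldr Zt (v + w) = l.foldr Zt v + l.foldr Zt w := by
  induction l with
  | nil => rfl
  | cons a l ih => simp only [List.foldr_cons, ih, Zt_add]

lemma foldr_zero {n : ℕ} (l : List (Fin (2 * n) → ZMod 2)) : l.foldr Zt 0 = 0 := by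
  induction l with
  | nil => rfl
  | cons a l ih => simp only [List.foldr_cons, ih, Zt_zero']

lemma foldr_sip {n : ℕ} (l : List (Fin (2 * n) → ZMod 2)) (v w : Fin (2 * n) → ZMod 2) :
    sip (l.foldr Zt v) (l.foldr Zt w) = sip v w := by
  induction l with
  | nil => rfl
  | cons a l ih => simp only [List.foldr_cons, Zt_sip, ih]

lemma foldr_rev {n : ℕ} (l : List (Fin (2 * n) → ZMod 2)) (v : Fin (2 * n) → ZMod 2) :
    l.reverse.foldr Zt (l.foldr Zt v) = v := by
  induction l generalizing v with
  | nil => rfl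
  | cons a l ih =>
      rw [List.reverse_cons, List.foldr_append]
      simp only [List.foldr_cons, List.foldr_nil]
      rw [Zt_invol, ih]

/-- move a nonzero vector to another nonzero vector with exactly two transvections -/
lemma move {n : ℕ} (a b : Fin (2 * n) → ZMod 2) (ha : a ≠ 0) (hb : b ≠ 0) :
    ∃ l : List (Fin (2 * n) → ZMod 2), l.length = 2 ∧ l.foldr Zt a = b := by
  by_cases hab : a = b
  · exact ⟨[0, 0], rfl, by rw [List.foldr_cons, List.foldr_cons, List.foldr_nil,
      Zt_zero, Zt_zero, hab]⟩
  rcases zmod2_cases (sip a b) with h1 | h1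
  · -- find u with sip a u = 1, sip b u = 1
    obtain ⟨u₁, hu₁⟩ := exists_sip_one a ha
    obtain ⟨u₂, hu₂⟩ := exists_sip_one b hb
    have key : ∃ u, sip a u = 1 ∧ sip b u = 1 := by
      rcases zmod2_cases (sip b u₁) with hb1 | hb1
      · rcases zmod2_cases (sip a u₂) with ha2 | ha2
        · exact ⟨u₁ + u₂, by rw [sip_add_right, hu₁, ha2, add_zero],
            by rw [sip_add_right, hb1, hu₂, zero_add]⟩
        · exact ⟨u₂, ha2, hu₂⟩
      · exact ⟨u₁, hu₁, hb1⟩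
    obtain ⟨u, hau, hbu⟩ := key
    refine ⟨[u + b, a + u], rfl, ?_⟩
    rw [List.foldr_cons, List.foldr_cons, List.foldr_nil]
    have s1 : Zt (a + u) a = u := by
      rw [Zt, sip_add_right, sip_self, zero_add, hau, one_smul]
      rw [← add_assoc, add_self_vec a, zero_add]
    rw [s1, Zt, sip_add_right, sip_self, zero_add, sip_comm u b, hbu, one_smul,
      ← add_assoc, add_self_vec u, zero_add]
  · refine ⟨[a + b, 0], rfl, ?_⟩
    rw [List.foldr_cons, List.foldr_cons, List.foldr_nil, Zt_zero, Zt, sip_add_right,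
      sip_self, zero_add, h1, one_smul, ← add_assoc, add_self_vec a, zero_add]

-- embeddings
def emb {n : ℕ} (i : Fin (2 * n)) : Fin (2 * (n + 1)) := ⟨i.val + 2, by omega⟩
def xt {n : ℕ} (w : Fin (2 * n) → ZMod 2) : Fin (2 * (n + 1)) → ZMod 2 :=
  fun j => if h : 2 ≤ j.val then w ⟨j.val - 2, by omega⟩ else 0
def res {n : ℕ} (v : Fin (2 * (n + 1)) → ZMod 2) : Fin (2 * n) → ZMod 2 :=
  fun i => v (emb i)
def e0 {n : ℕ} : Fin (2 * (n + 1)) := ⟨0, by omega⟩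
def e1 {n : ℕ} : Fin (2 * (n + 1)) := ⟨1, by omega⟩

lemma pr_e0 {n : ℕ} : pr (e0 (n := n)) = e1 := rfl
lemma pr_e1 {n : ℕ} : pr (e1 (n := n)) = e0 := rfl

lemma e0_ne_e1 {n : ℕ} : (e0 (n := n)) ≠ e1 := by
  rw [Ne, Fin.ext_iff]; simp [e0, e1]

lemma xt_apply_lt {n : ℕ} (w : Fin (2 * n) → ZMod 2) (j : Fin (2 * (n + 1)))
    (h : j.val < 2) : xt w j = 0 := by
  unfold xt; rw [dif_neg (by omega)]

lemma xt_e0 {n : ℕ} (w : Fin (2 * n) → ZMod 2) : xt w e0 = 0 :=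
  xt_apply_lt w e0 (by exact Nat.zero_lt_two)
lemma xt_e1 {n : ℕ} (w : Fin (2 * n) → ZMod 2) : xt w e1 = 0 :=
  xt_apply_lt w e1 (by exact Nat.one_lt_two)

lemma xt_emb {n : ℕ} (w : Fin (2 * n) → ZMod 2) (i : Fin (2 * n)) :
    xt w (emb i) = w i := by
  unfold xt
  rw [dif_pos (by exact Nat.le_add_left 2 i.val : 2 ≤ (emb i).val)]
  congr 1

lemma res_xt {n : ℕ} (w : Fin (2 * n) → ZMod 2) : res (xt w) = w :=
  funext fun i => xt_emb w i

lemma xt_add {n : ℕ} (a b : Fin (2 * n) → ZMod 2) : xt (a + b) = xt a + xt b := by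
  funext j; unfold xt; by_cases h : 2 ≤ j.val <;> simp [h]

lemma res_add {n : ℕ} (a b : Fin (2 * (n + 1)) → ZMod 2) : res (a + b) = res a + res b := rfl

lemma res_smul {n : ℕ} (c : ZMod 2) (a : Fin (2 * (n + 1)) → ZMod 2) :
    res (c • a) = c • res a := rfl

lemma pr_emb {n : ℕ} (i : Fin (2 * n)) : pr (emb i) = emb (pr i) := by
  rw [Fin.ext_iff]
  rcases i with ⟨i, hi⟩
  show (if (i + 2) % 2 = 0 then (i + 2) + 1 else (i + 2) - 1)
      = (if i % 2 = 0 then i + 1 else i - 1) + 2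
  split <;> split <;> omega

lemma sum_split {n : ℕ} (F : Fin (2 * (n + 1)) → ZMod 2) :
    ∑ j, F j = F e0 + F e1 + ∑ i, F (emb i) := by
  have key : ∑ j : Fin (2 * n + 1 + 1), F j
      = F 0 + (F (Fin.succ 0) + ∑ i : Fin (2 * n), F (Fin.succ (Fin.succ i))) := by
    rw [Fin.sum_univ_succ, Fin.sum_univ_succ]
  refine key.trans ?_
  have a0 : F 0 = F e0 := congrArg F (by apply Fin.ext; simp [e0])
  have a1 : F (Fin.succ 0) = F e1 := congrArg F (by apply Fin.ext; simp [e1])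
  have a2 : ∀ i : Fin (2 * n), F (Fin.succ (Fin.succ i)) = F (emb i) := fun i =>
    congrArg F (by apply Fin.ext; simp [emb])
  rw [a0, a1]
  rw [Finset.sum_congr rfl fun i _ => a2 i]
  rw [add_assoc]

lemma sip_xt_right {n : ℕ} (v : Fin (2 * (n + 1)) → ZMod 2) (h : Fin (2 * n) → ZMod 2) :
    sip v (xt h) = sip (res v) h := by
  rw [sip_eq, sip_eq, sum_split (fun j => v j * xt h (pr j))]
  rw [pr_e0, pr_e1, xt_e1, xt_e0, mul_zero, mul_zero, add_zero, zero_add]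
  refine Finset.sum_congr rfl fun i _ => ?_
  rw [pr_emb, xt_emb]
  rfl

lemma sip_xt_xt {n : ℕ} (a b : Fin (2 * n) → ZMod 2) :
    sip (xt a) (xt b) = sip a b := by
  rw [sip_xt_right, res_xt]

lemma Zt_xt_e0 {n : ℕ} (h : Fin (2 * n) → ZMod 2) (v : Fin (2 * (n + 1)) → ZMod 2) :
    Zt (xt h) v e0 = v e0 := by
  show (v + sip v (xt h) • xt h) e0 = v e0
  simp [xt_e0]

lemma Zt_xt_e1 {n : ℕ} (h : Fin (2 * n) → ZMod 2) (v : Fin (2 * (n + 1)) → ZMod 2) :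
    Zt (xt h) v e1 = v e1 := by
  show (v + sip v (xt h) • xt h) e1 = v e1
  simp [xt_e1]

lemma res_Zt_xt {n : ℕ} (h : Fin (2 * n) → ZMod 2) (v : Fin (2 * (n + 1)) → ZMod 2) :
    res (Zt (xt h) v) = Zt h (res v) := by
  show res (v + sip v (xt h) • xt h) = _
  rw [res_add, res_smul, res_xt, sip_xt_right, Zt]

lemma foldr_xt_e0 {n : ℕ} (l : List (Fin (2 * n) → ZMod 2)) (v : Fin (2 * (n + 1)) → ZMod 2) :
    (l.map xt).foldr Zt v e0 = v e0 := by
  induction l generalizing v with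
  | nil => rfl
  | cons a l ih => rw [List.map_cons, List.foldr_cons, Zt_xt_e0, ih]

lemma foldr_xt_e1 {n : ℕ} (l : List (Fin (2 * n) → ZMod 2)) (v : Fin (2 * (n + 1)) → ZMod 2) :
    (l.map xt).foldr Zt v e1 = v e1 := by
  induction l generalizing v with
  | nil => rfl
  | cons a l ih => rw [List.map_cons, List.foldr_cons, Zt_xt_e1, ih]

lemma res_foldr_xt {n : ℕ} (l : List (Fin (2 * n) → ZMod 2)) (v : Fin (2 * (n + 1)) → ZMod 2) :
    res ((l.map xt).foldr Zt v) = l.foldr Zt (res v) := by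
  induction l generalizing v with
  | nil => rfl
  | cons a l ih => rw [List.map_cons, List.foldr_cons, List.foldr_cons, res_Zt_xt, ih]

lemma vec_ext {n : ℕ} (u w : Fin (2 * (n + 1)) → ZMod 2)
    (h0 : u e0 = w e0) (h1 : u e1 = w e1) (hr : res u = res w) : u = w := by
  funext j
  rcases j with ⟨j, hj⟩
  match j, hj with
  | 0, hj => exact h0
  | 1, hj => exact h1
  | (k + 2), hj => exact congrFun hr ⟨k, by omega⟩

lemma res_single_e0 {n : ℕ} : res (Pi.single (e0 (n := n)) (1 : ZMod 2)) = 0 := by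
  funext i
  show Pi.single e0 (1 : ZMod 2) (emb i) = 0
  rw [Pi.single_eq_of_ne]
  rw [Ne, Fin.ext_iff]
  show ¬ (i.val + 2 = 0)
  omega

lemma res_single_e1 {n : ℕ} : res (Pi.single (e1 (n := n)) (1 : ZMod 2)) = 0 := by
  funext i
  show Pi.single e1 (1 : ZMod 2) (emb i) = 0
  rw [Pi.single_eq_of_ne]
  rw [Ne, Fin.ext_iff]
  show ¬ (i.val + 2 = 1)
  omega

lemma decomp {n : ℕ} (v : Fin (2 * (n + 1)) → ZMod 2) :
    v = v e0 • (Pi.single e0 1 : Fin (2 * (n + 1)) → ZMod 2)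
      + v e1 • (Pi.single e1 1 : Fin (2 * (n + 1)) → ZMod 2) + xt (res v) := by
  apply vec_ext
  · rw [Pi.add_apply, Pi.add_apply, xt_e0, Pi.smul_apply, Pi.smul_apply,
      Pi.single_eq_same, Pi.single_eq_of_ne e0_ne_e1]
    simp
  · rw [Pi.add_apply, Pi.add_apply, xt_e1, Pi.smul_apply, Pi.smul_apply,
      Pi.single_eq_same, Pi.single_eq_of_ne e0_ne_e1.symm]
    simp
  · rw [res_add, res_add, res_smul, res_smul, res_xt, res_single_e0, res_single_e1]
    simp

-- notation for basis vectors
noncomputable def E0 {n : ℕ} : Fin (2 * (n + 1)) → ZMod 2 := Pi.single e0 1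
noncomputable def E1 {n : ℕ} : Fin (2 * (n + 1)) → ZMod 2 := Pi.single e1 1

lemma sip_E0 {n : ℕ} (v : Fin (2 * (n + 1)) → ZMod 2) : sip E0 v = v e1 := by
  rw [E0, sip_single, pr_e0]
lemma sip_E1 {n : ℕ} (v : Fin (2 * (n + 1)) → ZMod 2) : sip E1 v = v e0 := by
  rw [E1, sip_single, pr_e1]

lemma E0_ne_zero {n : ℕ} : (E0 (n := n)) ≠ 0 := by
  intro h
  have := congrFun h e0
  rw [E0, Pi.single_eq_same] at this
  exact one_ne_zero this

lemma sip_E0_E1 {n : ℕ} : sip (E0 (n := n)) E1 = 1 := by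
  rw [sip_E0, E1, Pi.single_eq_same]

/-- move x to E1 fixing E0, with exactly two transvections -/
lemma move2 {n : ℕ} (x : Fin (2 * (n + 1)) → ZMod 2) (hx : sip E0 x = 1) :
    ∃ l : List (Fin (2 * (n + 1)) → ZMod 2), l.length = 2 ∧
      l.foldr Zt x = E1 ∧ l.foldr Zt E0 = E0 := by
  by_cases hxe : x = E1
  · exact ⟨[0, 0], rfl, by simp [Zt_zero, hxe], by simp [Zt_zero]⟩
  rcases zmod2_cases (sip x E1) with h1 | h1
  · -- via z = E0 + E1
    set z : Fin (2 * (n + 1)) → ZMod 2 := E0 + E1 with hz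
    have hxz : sip x z = 1 := by
      rw [hz, sip_add_right, ← sip_comm E0 x, hx, h1, add_zero]
    have hE0z : sip E0 z = 1 := by
      rw [hz, sip_add_right, sip_self, sip_E0_E1, zero_add]
    refine ⟨[E0, x + z], rfl, ?_, ?_⟩
    · rw [List.foldr_cons, List.foldr_cons, List.foldr_nil]
      have s1 : Zt (x + z) x = z := by
        rw [Zt, sip_add_right, sip_self, zero_add, hxz, one_smul, ← add_assoc,
          add_self_vec x, zero_add]
      rw [s1, Zt, sip_comm z E0, hE0z, one_smul, hz]
      rw [show E0 + E1 + E0 = E1 + (E0 + E0) by abel, add_self_vec E0, add_zero]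
    · rw [List.foldr_cons, List.foldr_cons, List.foldr_nil]
      have s0 : Zt (x + z) E0 = E0 := by
        rw [Zt, sip_add_right, hx, hE0z, CharTwo.add_self_eq_zero, zero_smul, add_zero]
      rw [s0, Zt, sip_self, zero_smul, add_zero]
  · refine ⟨[x + E1, 0], rfl, ?_, ?_⟩
    · rw [List.foldr_cons, List.foldr_cons, List.foldr_nil, Zt_zero, Zt,
        sip_add_right, sip_self, zero_add, h1, one_smul, ← add_assoc,
        add_self_vec x, zero_add]
    · rw [List.foldr_cons, List.foldr_cons, List.foldr_nil, Zt_zero, Zt,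
        sip_add_right, hx]
      have : sip (E0 (n := n)) E1 = 1 := sip_E0_E1
      rw [this, CharTwo.add_self_eq_zero, zero_smul, add_zero]

/-- main induction -/
lemma key : ∀ n (f : (Fin (2 * n) → ZMod 2) → (Fin (2 * n) → ZMod 2)),
    (∀ v w, f (v + w) = f v + f w) → (∀ v w, sip (f v) (f w) = sip v w) →
    ∃ l : List (Fin (2 * n) → ZMod 2), l.length = 4 * n ∧ ∀ v, f v = l.foldr Zt v := by
  intro n
  induction n with
  | zero =>
      intro f hadd hsip
      refine ⟨[], rfl, fun v => ?_⟩
      have hv : v = 0 := funext fun i => absurd i.isLt (by omega)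
      have h0 : f 0 = 0 := by
        have := hadd 0 0
        rw [add_zero] at this
        exact left_eq_add.mp this
      rw [List.foldr_nil, hv, h0]
  | succ n ih =>
      intro f hadd hsip
      have hf0 : f 0 = 0 := by
        have := hadd 0 0
        rw [add_zero] at this
        exact left_eq_add.mp this
      have hinj : ∀ a, a ≠ 0 → f a ≠ 0 := by
        intro a ha hfa
        obtain ⟨u, hu⟩ := exists_sip_one a ha
        have := hsip a u
        rw [hfa, sip_zero_left, hu] at this
        exact one_ne_zero this.symm
      -- move f E0 to E0
      obtain ⟨l1, hl1len, hl1⟩ := move (f E0) E0 (hinj E0 E0_ne_zero) E0_ne_zero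
      set x := l1.foldr Zt (f E1) with hxdef
      have hsipx : sip E0 x = 1 := by
        rw [← hl1, hxdef, foldr_sip, hsip, sip_E0_E1]
      obtain ⟨l2, hl2len, hl2x, hl2fix⟩ := move2 x hsipx
      set L := l2 ++ l1 with hL
      have hLlen : L.length = 4 := by rw [hL, List.length_append, hl1len, hl2len]
      set Tf : (Fin (2 * (n + 1)) → ZMod 2) → (Fin (2 * (n + 1)) → ZMod 2) :=
        fun v => L.foldr Zt (f v) with hTf
      have hTfE0 : Tf E0 = E0 := by
        rw [hTf]; dsimp only; rw [hL, List.foldr_append, hl1, hl2fix]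
      have hTfE1 : Tf E1 = E1 := by
        rw [hTf]; dsimp only; rw [hL, List.foldr_append, ← hxdef, hl2x]
      have hTfadd : ∀ v w, Tf (v + w) = Tf v + Tf w := by
        intro v w; rw [hTf]; dsimp only; rw [hadd, foldr_add]
      have hTfsip : ∀ v w, sip (Tf v) (Tf w) = sip v w := by
        intro v w; rw [hTf]; dsimp only; rw [foldr_sip, hsip]
      have hTf0 : Tf 0 = 0 := by rw [hTf]; dsimp only; rw [hf0, foldr_zero]
      have hTfsmul : ∀ (c : ZMod 2) v, Tf (c • v) = c • Tf v := by
        intro c v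
        rcases zmod2_cases c with hc | hc <;> subst hc
        · rw [zero_smul, zero_smul, hTf0]
        · rw [one_smul, one_smul]
      -- the restriction
      set g : (Fin (2 * n) → ZMod 2) → (Fin (2 * n) → ZMod 2) :=
        fun w => res (Tf (xt w)) with hg
      have hxtg : ∀ w, xt (g w) = Tf (xt w) := by
        intro w
        apply vec_ext
        · rw [xt_e0]
          have : Tf (xt w) e0 = sip E1 (Tf (xt w)) := (sip_E1 _).symm
          rw [this, ← hTfE1, hTfsip, sip_E1, xt_e0]
        · rw [xt_e1]
          have : Tf (xt w) e1 = sip E0 (Tf (xt w)) := (sip_E0 _).symm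
          rw [this, ← hTfE0, hTfsip, sip_E0, xt_e1]
        · rw [res_xt, hg]
      have hgadd : ∀ v w, g (v + w) = g v + g w := by
        intro v w
        rw [hg]; dsimp only
        rw [xt_add, hTfadd, res_add]
      have hgsip : ∀ v w, sip (g v) (g w) = sip v w := by
        intro v w
        have : sip (xt (g v)) (xt (g w)) = sip (g v) (g w) := sip_xt_xt _ _
        rw [← this, hxtg, hxtg, hTfsip, sip_xt_xt]
      obtain ⟨l', hl'len, hl'⟩ := ih g hgadd hgsip
      refine ⟨L.reverse ++ l'.map xt, ?_, ?_⟩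
      · rw [List.length_append, List.length_reverse, List.length_map, hLlen, hl'len]
        ring
      intro v
      have hTfE0' : Tf (Pi.single e0 1 : Fin (2 * (n + 1)) → ZMod 2)
          = (Pi.single e0 1 : Fin (2 * (n + 1)) → ZMod 2) := hTfE0
      have hTfE1' : Tf (Pi.single e1 1 : Fin (2 * (n + 1)) → ZMod 2)
          = (Pi.single e1 1 : Fin (2 * (n + 1)) → ZMod 2) := hTfE1
      have main : Tf v = (l'.map xt).foldr Zt v := by
        apply vec_ext
        · rw [foldr_xt_e0]
          conv_lhs => rw [decomp v]
          rw [hTfadd, hTfadd, hTfsmul, hTfsmul, hTfE0', hTfE1', ← hxtg]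
          rw [Pi.add_apply, Pi.add_apply, xt_e0, Pi.smul_apply, Pi.smul_apply]
          rw [Pi.single_eq_same, Pi.single_eq_of_ne e0_ne_e1]
          simp
        · rw [foldr_xt_e1]
          conv_lhs => rw [decomp v]
          rw [hTfadd, hTfadd, hTfsmul, hTfsmul, hTfE0', hTfE1', ← hxtg]
          rw [Pi.add_apply, Pi.add_apply, xt_e1, Pi.smul_apply, Pi.smul_apply]
          rw [Pi.single_eq_same, Pi.single_eq_of_ne e0_ne_e1.symm]
          simp
        · rw [res_foldr_xt, ← hl']
          conv_lhs => rw [decomp v]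
          rw [hTfadd, hTfadd, hTfsmul, hTfsmul, hTfE0', hTfE1', ← hxtg]
          rw [res_add, res_add, res_smul, res_smul, res_xt]
          rw [res_single_e0, res_single_e1]
          simp
      have : L.reverse.foldr Zt (Tf v) = f v := by
        rw [hTf]; dsimp only; rw [foldr_rev]
      rw [← this, main, List.foldr_append]

lemma Lam_sq (n : ℕ) : Lam n * Lam n = 1 := by
  ext i j
  rw [Matrix.mul_apply]
  rw [Finset.sum_eq_single (pr i)]
  · rw [Lam_apply, Lam_apply, if_pos rfl, one_mul, pr_pr, Matrix.one_apply]
    by_cases h : j = i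
    · rw [if_pos h, if_pos h.symm]
    · rw [if_neg h, if_neg (Ne.symm h)]
  · intro k _ hk
    rw [Lam_apply, if_neg hk, zero_mul]
  · simp

lemma Lam_transpose (n : ℕ) : (Lam n)ᵀ = Lam n := by
  ext i j
  rw [Matrix.transpose_apply, Lam, Matrix.of_apply, Matrix.of_apply]
  rw [if_congr (show _ ∧ _ ↔ _ ∧ _ by
    constructor <;> (rintro ⟨a, b⟩; exact ⟨a.symm, b.symm⟩)) rfl rfl]

lemma Sp_sip {n : ℕ} {S : Matrix (Fin (2 * n)) (Fin (2 * n)) (ZMod 2)} (hS : S ∈ Sp n) :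
    ∀ v w, sip (S.mulVec v) (S.mulVec w) = sip v w := by
  have hS' : S * Lam n * Sᵀ = Lam n := hS
  have h1 : S * (Lam n * Sᵀ * Lam n) = 1 := by
    rw [← Matrix.mul_assoc, ← Matrix.mul_assoc, hS', Lam_sq]
  have h2 : Lam n * Sᵀ * Lam n * S = 1 := mul_eq_one_comm.mp h1
  have StS : Sᵀ * Lam n * S = Lam n := by
    calc Sᵀ * Lam n * S = Lam n * Lam n * (Sᵀ * Lam n * S) := by rw [Lam_sq, one_mul]
      _ = Lam n * (Lam n * Sᵀ * Lam n * S) := by simp only [Matrix.mul_assoc]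
      _ = Lam n * 1 := by rw [h2]
      _ = Lam n := mul_one _
  intro v w
  show (S.mulVec v) ⬝ᵥ (Lam n).mulVec (S.mulVec w) = sip v w
  rw [Matrix.mulVec_mulVec, dotProduct_mulVec, ← Matrix.mulVec_transpose,
    Matrix.mulVec_mulVec, Matrix.transpose_mul, Matrix.mul_assoc, Lam_transpose,
    ← Matrix.mul_assoc, StS]
  rw [dotProduct_comm]
  exact sip_comm w v

/-- Every element of `Sp(2n, F₂)` is a product of at most `4n` symplectic
transvections (as a linear map on `F₂^{2n}`). -/
theorem symplectic_prod_transvections (n : ℕ)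
    (S : Matrix (Fin (2 * n)) (Fin (2 * n)) (ZMod 2)) (hS : S ∈ Sp n) :
    ∃ l : List (Fin (2 * n) → ZMod 2), l.length ≤ 4 * n ∧
      ∀ v, S.mulVec v = l.foldr Zt v := by
  obtain ⟨l, hlen, hl⟩ := key n (S.mulVec) (fun v w => Matrix.mulVec_add S v w) (Sp_sip hS)
  exact ⟨l, le_of_eq hlen, hl⟩
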